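/- Let H be a real Hilbert space, I = {1,...,n} a finite index set, and for each i ∈ I let λ_i > 0 with Σ_{i∈I} λ_i = 1 and let T_i : H → H be firmly nonexpansive. Set T = Σ_{i∈I} λ_i T_i. If x and y are points in H such that ‖Tx − Ty‖² = ⟪x − y, Tx − Ty⟫, then T_i x − T_i y = Tx − Ty for every i ∈ I. Consequently, if there exists i₀ ∈ I such that T_{i₀} is injective, then T is injective. -/
import Mathlib


open RealInnerProductSpace

variable {H : Type*} [NormedAddCommGroup H] [InnerProductSpace ℝ H] [CompleteSpace H]

/-- `T` is firmly nonexpansive if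
`‖Tx − Ty‖² + ‖(Id − T)x − (Id − T)y‖² ≤ ‖x − y‖²` for all `x, y`. -/
def FirmlyNonexpansive (T : H → H) : Prop :=
  ∀ x y : H, ‖T x - T y‖ ^ 2 + ‖(x - T x) - (y - T y)‖ ^ 2 ≤ ‖x - y‖ ^ 2

/-- A convex combination `T = Σ λᵢ Tᵢ` of firmly nonexpansive maps: whenever
`‖Tx − Ty‖² = ⟪x − y, Tx − Ty⟫`, each `Tᵢx − Tᵢy = Tx − Ty`; consequently, if some
`T_{i₀}` is injective then `T` is injective. -/
theorem stmt0 {n : ℕ} (hn : 0 < n) (lam : Fin n → ℝ) (hpos : ∀ i, 0 < lam i)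
    (hsum : ∑ i, lam i = 1) (T : Fin n → H → H) (hT : ∀ i, FirmlyNonexpansive (T i)) :
    (∀ x y : H,
      ‖(∑ i, lam i • T i x) - (∑ i, lam i • T i y)‖ ^ 2
          = ⟪x - y, (∑ i, lam i • T i x) - (∑ i, lam i • T i y)⟫ →
        ∀ i, T i x - T i y = (∑ i, lam i • T i x) - (∑ i, lam i • T i y)) ∧
    ((∃ i₀, Function.Injective (T i₀)) →
      Function.Injective (fun x => ∑ i, lam i • T i x)) := by

  have key : ∀ x y : H,
      ‖(∑ i, lam i • T i x) - (∑ i, lam i • T i y)‖ ^ 2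
          = ⟪x - y, (∑ i, lam i • T i x) - (∑ i, lam i • T i y)⟫ →
        ∀ i, T i x - T i y = (∑ i, lam i • T i x) - (∑ i, lam i • T i y) := by
    intro x y h i
    set d := x - y with hd
    set u := (∑ i, lam i • T i x) - (∑ i, lam i • T i y) with hu
    have husum : u = ∑ j, lam j • (T j x - T j y) := by
      rw [hu, ← Finset.sum_sub_distrib]
      simp [smul_sub]
    have hfi : ∀ j, ‖T j x - T j y‖ ^ 2 ≤ ⟪d, T j x - T j y⟫ := by
      intro j
      have h1 := hT j x y
      have h2 : (x - T j x) - (y - T j y) = d - (T j x - T j y) := by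
        rw [hd]; abel
      rw [h2] at h1
      have h3 := norm_sub_sq_real d (T j x - T j y)
      nlinarith [h1, h3]
    have hdu : ⟪d, u⟫ = ∑ j, lam j * ⟪d, T j x - T j y⟫ := by
      rw [husum, inner_sum]
      simp [real_inner_smul_right]
    have huu : ‖u‖ ^ 2 = ∑ j, lam j * ⟪T j x - T j y, u⟫ := by
      rw [← real_inner_self_eq_norm_sq]
      nth_rewrite 1 [husum]
      rw [sum_inner]
      simp [real_inner_smul_left]
    have hSle : ∑ j, lam j * ‖(T j x - T j y) - u‖ ^ 2 ≤ 0 := by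
      have hexp : ∀ j, lam j * ‖(T j x - T j y) - u‖ ^ 2
          = lam j * ‖T j x - T j y‖ ^ 2 - 2 * (lam j * ⟪T j x - T j y, u⟫)
            + lam j * ‖u‖ ^ 2 := by
        intro j
        rw [norm_sub_sq_real]
        ring
      rw [Finset.sum_congr rfl (fun j _ => hexp j)]
      rw [Finset.sum_add_distrib, Finset.sum_sub_distrib, ← Finset.mul_sum,
        ← Finset.sum_mul, hsum, one_mul, ← huu]
      have hle : ∑ j, lam j * ‖T j x - T j y‖ ^ 2 ≤ ∑ j, lam j * ⟪d, T j x - T j y⟫ :=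
        Finset.sum_le_sum fun j _ =>
          mul_le_mul_of_nonneg_left (hfi j) (hpos j).le
      rw [← hdu] at hle
      nlinarith [hle, h]
    have hzero : ∀ j ∈ Finset.univ, lam j * ‖(T j x - T j y) - u‖ ^ 2 = 0 := by
      rw [← Finset.sum_eq_zero_iff_of_nonneg
        (fun j _ => mul_nonneg (hpos j).le (by positivity))]
      exact le_antisymm hSle (Finset.sum_nonneg fun j _ =>
        mul_nonneg (hpos j).le (by positivity))
    have := hzero i (Finset.mem_univ i)
    have h4 : ‖(T i x - T i y) - u‖ ^ 2 = 0 := by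
      rcases mul_eq_zero.mp this with h' | h'
      · exact absurd h' (hpos i).ne'
      · exact h'
    have h5 : (T i x - T i y) - u = 0 := by
      have := pow_eq_zero_iff (n := 2) (by norm_num) |>.mp h4
      exact norm_eq_zero.mp this
    exact sub_eq_zero.mp h5
  refine ⟨key, ?_⟩
  rintro ⟨i₀, hinj⟩ a b hab
  simp only at hab
  have hzero : (∑ i, lam i • T i a) - (∑ i, lam i • T i b) = 0 := sub_eq_zero.mpr hab
  have h : ‖(∑ i, lam i • T i a) - (∑ i, lam i • T i b)‖ ^ 2
      = ⟪a - b, (∑ i, lam i • T i a) - (∑ i, lam i • T i b)⟫ := by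
    rw [hzero]; simp
  have := key a b h i₀
  rw [hzero] at this
  exact hinj (sub_eq_zero.mp this)
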